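/- If a cirquent C has a CL5 proof in which no cirquent contains two distinct ogroups that share a common oformula, then C is provable in CL5⁻ (in fact, that proof contains no application of duplication). -/

import Mathlib

namespace CirquentCalc

/-- Formulas: literals (negation applied only to atoms), ∧, ∨. -/
inductive Fml where
  | pos : ℕ → Fml
  | neg : ℕ → Fml
  | and : Fml → Fml → Fml
  | or : Fml → Fml → Fml
deriving DecidableEq

namespace Fml

/-- Negation (pushed to atoms, as ¬ applies only to atoms). -/
def negate : Fml → Fml
  | pos n => neg n
  | neg n => pos n
  | and a b => or a.negate b.negate
  | or a b => and a.negate b.negate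

/-- Substitution extended homomorphically. -/
def subst (σ : ℕ → Fml) : Fml → Fml
  | pos n => σ n
  | neg n => (σ n).negate
  | and a b => and (a.subst σ) (b.subst σ)
  | or a b => or (a.subst σ) (b.subst σ)

/-- Classical evaluation under a truth assignment. -/
def eval (v : ℕ → Bool) : Fml → Bool
  | pos n => v n
  | neg n => !(v n)
  | and a b => a.eval v && b.eval v
  | or a b => a.eval v || b.eval v

/-- Number of positive occurrences of atom `a`. -/
def cPos (a : ℕ) : Fml → ℕ
  | pos n => if n = a then 1 else 0
  | neg _ => 0
  | and f g => f.cPos a + g.cPos a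
  | or f g => f.cPos a + g.cPos a

/-- Number of negative occurrences of atom `a`. -/
def cNeg (a : ℕ) : Fml → ℕ
  | pos _ => 0
  | neg n => if n = a then 1 else 0
  | and f g => f.cNeg a + g.cNeg a
  | or f g => f.cNeg a + g.cNeg a

/-- Total number of positive occurrences of atoms. -/
def posOcc : Fml → ℕ
  | pos _ => 1
  | neg _ => 0
  | and f g => f.posOcc + g.posOcc
  | or f g => f.posOcc + g.posOcc

/-- Length: total number of occurrences of literals and connectives. -/
def len : Fml → ℕ
  | pos _ => 1
  | neg _ => 1
  | and f g => f.len + g.len + 1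
  | or f g => f.len + g.len + 1

/-- Number of occurrences of ∧. -/
def nAnd : Fml → ℕ
  | pos _ => 0
  | neg _ => 0
  | and f g => f.nAnd + g.nAnd + 1
  | or f g => f.nAnd + g.nAnd

/-- Number of occurrences of ∨. -/
def nOr : Fml → ℕ
  | pos _ => 0
  | neg _ => 0
  | and f g => f.nOr + g.nOr
  | or f g => f.nOr + g.nOr + 1

end Fml

def Tautology (A : Fml) : Prop := ∀ v, A.eval v = true

/-- No atom has more than two occurrences. -/
def Binary (A : Fml) : Prop := ∀ a, A.cPos a + A.cNeg a ≤ 2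

/-- Whenever an atom occurs twice, one occurrence is positive and one negative. -/
def Normal (A : Fml) : Prop := ∀ a, A.cPos a ≤ 1 ∧ A.cNeg a ≤ 1

def AtomicLevel (σ : ℕ → Fml) : Prop := ∀ n, ∃ m, σ n = Fml.pos m

/-- `F` is an instance of `B`: σ(B) = F for some substitution σ. -/
def InstanceOf (F B : Fml) : Prop := ∃ σ, B.subst σ = F

/-- `F` is an atomic-level instance of `B`. -/
def AtomicInstanceOf (F B : Fml) : Prop := ∃ σ, AtomicLevel σ ∧ B.subst σ = F

/-- A cirquent: a pool of (occurrences of) formulas, and a list of ogroups,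
each an (index-)set of oformulas of the pool. -/
structure Cirquent where
  pool : List Fml
  groups : List (Finset ℕ)

def emptyCirquent : Cirquent := ⟨[], []⟩

def idCirquent (F : Fml) : Cirquent := ⟨[F.negate, F], [{0, 1}]⟩

/-- The cirquent with pool ⟨F⟩ and one ogroup containing F. -/
def fmlCirquent (F : Fml) : Cirquent := ⟨[F], [{0}]⟩

/-- Index renaming swapping `i` and `i+1`. -/
def swapIdx (i : ℕ) : ℕ → ℕ := fun j => if j = i then i + 1 else if j = i + 1 then i else j

/-- Index renaming when a new oformula is inserted at position `i`. -/
def insShift (i : ℕ) : ℕ → ℕ := fun j => if j < i then j else j + 1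

/-- Index renaming when the oformulas at positions `i`, `i+1` are merged into one at `i`. -/
def mergeIdx (i : ℕ) : ℕ → ℕ := fun j => if j ≤ i then j else j - 1

/-- Mix: placing the two premise cirquents side by side. -/
def MixStep (A B C : Cirquent) : Prop :=
  C.pool = A.pool ++ B.pool ∧
  C.groups = A.groups ++ B.groups.map (Finset.image (· + A.pool.length))

/-- Oformula exchange: swap two adjacent oformulas, preserving containment. -/
def OfExchStep (P C : Cirquent) : Prop :=
  ∃ (l₁ l₂ : List Fml) (F G : Fml),
    P.pool = l₁ ++ F :: G :: l₂ ∧ C.pool = l₁ ++ G :: F :: l₂ ∧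
    C.groups = P.groups.map (Finset.image (swapIdx l₁.length))

/-- Ogroup exchange: swap two adjacent ogroups. -/
def OgExchStep (P C : Cirquent) : Prop :=
  C.pool = P.pool ∧
  ∃ (g₁ g₂ : List (Finset ℕ)) (Γ Δ : Finset ℕ),
    P.groups = g₁ ++ Γ :: Δ :: g₂ ∧ C.groups = g₁ ++ Δ :: Γ :: g₂

/-- Pool weakening: insert a new oformula, contained in no ogroup. -/
def PoolWeakStep (P C : Cirquent) : Prop :=
  ∃ (l₁ l₂ : List Fml) (F : Fml),
    P.pool = l₁ ++ l₂ ∧ C.pool = l₁ ++ F :: l₂ ∧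
    C.groups = P.groups.map (Finset.image (insShift l₁.length))

/-- Ogroup weakening: add a new arc between a pre-existing ogroup and oformula. -/
def OgWeakStep (P C : Cirquent) : Prop :=
  C.pool = P.pool ∧
  ∃ (g₁ g₂ : List (Finset ℕ)) (Γ : Finset ℕ) (j : ℕ),
    j < P.pool.length ∧ j ∉ Γ ∧
    P.groups = g₁ ++ Γ :: g₂ ∧ C.groups = g₁ ++ insert j Γ :: g₂

/-- Downward duplication: replace an ogroup by two adjacent copies of it. -/
def DupDownStep (P C : Cirquent) : Prop :=
  C.pool = P.pool ∧
  ∃ (g₁ g₂ : List (Finset ℕ)) (Γ : Finset ℕ),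
    P.groups = g₁ ++ Γ :: g₂ ∧ C.groups = g₁ ++ Γ :: Γ :: g₂

/-- Upward duplication: the converse of downward duplication. -/
def DupUpStep (P C : Cirquent) : Prop :=
  C.pool = P.pool ∧
  ∃ (g₁ g₂ : List (Finset ℕ)) (Γ : Finset ℕ),
    P.groups = g₁ ++ Γ :: Γ :: g₂ ∧ C.groups = g₁ ++ Γ :: g₂

/-- ∨-introduction: merge two adjacent oformulas F, G into F ∨ G. -/
def OrIntroStep (P C : Cirquent) : Prop :=
  ∃ (l₁ l₂ : List Fml) (F G : Fml),
    P.pool = l₁ ++ F :: G :: l₂ ∧ C.pool = l₁ ++ (Fml.or F G) :: l₂ ∧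
    C.groups = P.groups.map (Finset.image (mergeIdx l₁.length))

/-- The merging of the ogroup list in ∧-introduction: no ogroup contains both `i`
and `i+1`; every ogroup containing `i` is immediately followed by one containing
`i+1` and vice versa; such pairs are merged. -/
inductive AndMerge (i : ℕ) : List (Finset ℕ) → List (Finset ℕ) → Prop where
  | nil : AndMerge i [] []
  | skip {Γ : Finset ℕ} {l l' : List (Finset ℕ)} :
      i ∉ Γ → (i + 1) ∉ Γ → AndMerge i l l' → AndMerge i (Γ :: l) (Γ :: l')
  | merge {Γ Δ : Finset ℕ} {l l' : List (Finset ℕ)} :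
      i ∈ Γ → (i + 1) ∉ Γ → (i + 1) ∈ Δ → i ∉ Δ →
      AndMerge i l l' → AndMerge i (Γ :: Δ :: l) ((Γ ∪ Δ) :: l')

/-- ∧-introduction. -/
def AndIntroStep (P C : Cirquent) : Prop :=
  ∃ (l₁ l₂ : List Fml) (F G : Fml) (merged : List (Finset ℕ)),
    P.pool = l₁ ++ F :: G :: l₂ ∧ C.pool = l₁ ++ (Fml.and F G) :: l₂ ∧
    AndMerge l₁.length P.groups merged ∧
    C.groups = merged.map (Finset.image (mergeIdx l₁.length))

inductive RuleName where
  | emptyAx | idAx | mix | ofExch | ogExch | poolWeak | ogWeak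
  | dupDown | dupUp | orIntro | andIntro
deriving DecidableEq

/-- The unary (one-premise) rules, by name. -/
def unRel : RuleName → Cirquent → Cirquent → Prop
  | .ofExch => OfExchStep
  | .ogExch => OgExchStep
  | .poolWeak => PoolWeakStep
  | .ogWeak => OgWeakStep
  | .dupDown => DupDownStep
  | .dupUp => DupUpStep
  | .orIntro => OrIntroStep
  | .andIntro => AndIntroStep
  | _ => fun _ _ => False

/-- Proof trees: each node is labeled by its cirquent and the rule used. -/
inductive PTree where
  | leaf (C : Cirquent) (r : RuleName)
  | un (C : Cirquent) (r : RuleName) (p : PTree)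
  | bin (C : Cirquent) (r : RuleName) (p q : PTree)

namespace PTree

def concl : PTree → Cirquent
  | leaf C _ => C
  | un C _ _ => C
  | bin C _ _ _ => C

/-- Validity: each node follows from its children by the named rule. -/
def Valid : PTree → Prop
  | leaf C r =>
      (r = .emptyAx ∧ C = emptyCirquent) ∨ (r = .idAx ∧ ∃ F, C = idCirquent F)
  | un C r p => p.Valid ∧ unRel r p.concl C
  | bin C r p q => p.Valid ∧ q.Valid ∧ r = .mix ∧ MixStep p.concl q.concl C

/-- Number of applications of rule `r` in the proof. -/
def count (r : RuleName) : PTree → ℕ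
  | leaf _ r' => if r' = r then 1 else 0
  | un _ r' p => (if r' = r then 1 else 0) + p.count r
  | bin _ r' p q => (if r' = r then 1 else 0) + p.count r + q.count r

/-- The cirquents occurring in the proof. -/
def cirquents : PTree → List Cirquent
  | leaf C _ => [C]
  | un C _ p => C :: p.cirquents
  | bin C _ p q => C :: (p.cirquents ++ q.cirquents)

/-- Total number of rule applications (nodes). -/
def nodes : PTree → ℕ
  | leaf _ _ => 1
  | un _ _ p => p.nodes + 1
  | bin _ _ p q => p.nodes + q.nodes + 1

/-- Number of leaves of the proof tree. -/
def leavesCount : PTree → ℕ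
  | leaf _ _ => 1
  | un _ _ p => p.leavesCount
  | bin _ _ p q => p.leavesCount + q.leavesCount

end PTree

/-- A proof uses no duplication. -/
def DupFree (p : PTree) : Prop :=
  p.count RuleName.dupDown = 0 ∧ p.count RuleName.dupUp = 0

/-- Provability of a cirquent in CL5. -/
def ProvesC (C : Cirquent) : Prop := ∃ p : PTree, p.Valid ∧ p.concl = C

/-- Provability of a formula in CL5. -/
def ProvesCL5 (F : Fml) : Prop := ∃ p : PTree, p.Valid ∧ p.concl = fmlCirquent F

/-- Provability of a formula in CL5⁻ (CL5 without duplication). -/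
def ProvesCL5m (F : Fml) : Prop :=
  ∃ p : PTree, p.Valid ∧ DupFree p ∧ p.concl = fmlCirquent F

/-- Number of arcs of a cirquent (sum of the sizes of its ogroups). -/
def Cirquent.arcs (C : Cirquent) : ℕ := (C.groups.map Finset.card).sum

/-- Size of a cirquent: sum of the lengths of the oformulas in its pool plus
the sum of the sizes of its ogroups. -/
def Cirquent.size (C : Cirquent) : ℕ := (C.pool.map Fml.len).sum + C.arcs

/-- Size of a proof: the sum of the sizes of the cirquents it contains. -/
def PTree.size (p : PTree) : ℕ := (p.cirquents.map Cirquent.size).sum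

/-- Total number of positive occurrences of atoms in the pool. -/
def Cirquent.poolPosOcc (C : Cirquent) : ℕ := (C.pool.map Fml.posOcc).sum

end CirquentCalc

namespace CirquentCalc

def GoodC (D : Cirquent) : Prop := ∀ Γ ∈ D.groups, Γ.Nonempty

lemma andMerge_good {i : ℕ} {l l' : List (Finset ℕ)} (h : AndMerge i l l')
    (hg : ∀ Γ ∈ l, Γ.Nonempty) : ∀ Γ ∈ l', Γ.Nonempty := by
  induction h with
  | nil => simp
  | skip _ _ _ ih =>
    intro Γ hΓ
    rcases List.mem_cons.mp hΓ with h | h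
    · subst h; exact hg _ (List.mem_cons_self)
    · exact ih (fun Δ hΔ => hg Δ (List.mem_cons_of_mem _ hΔ)) _ h
  | merge h1 _ _ _ _ ih =>
    intro Γ hΓ
    rcases List.mem_cons.mp hΓ with h | h
    · subst h; exact Finset.Nonempty.inl ⟨_, h1⟩
    · exact ih (fun Δ hΔ => hg Δ (by simp [hΔ])) _ h

lemma valid_good : ∀ p : PTree, p.Valid → GoodC p.concl := by
  intro p
  induction p with
  | leaf C r =>
    rintro (⟨_, rfl⟩ | ⟨_, F, rfl⟩) <;> intro Γ hΓ <;>
      simp [PTree.concl, emptyCirquent, idCirquent] at hΓ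
    subst hΓ; exact ⟨0, by simp⟩
  | un C r p ih =>
    rintro ⟨hp, hstep⟩
    have hg := ih hp
    intro Γ hΓ
    simp only [PTree.concl] at *
    cases r <;> simp only [unRel] at hstep
    · -- ofExch
      obtain ⟨l₁, l₂, F, G, _, _, hgr⟩ := hstep
      rw [hgr] at hΓ
      obtain ⟨Δ, hΔ, rfl⟩ := List.mem_map.mp hΓ
      exact (hg Δ hΔ).image _
    · -- ogExch
      obtain ⟨_, g₁, g₂, Γ', Δ', h1, h2⟩ := hstep
      rw [h2] at hΓ
      exact hg Γ (by rw [h1]; simp at hΓ ⊢; tauto)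
    · -- poolWeak
      obtain ⟨l₁, l₂, F, _, _, hgr⟩ := hstep
      rw [hgr] at hΓ
      obtain ⟨Δ, hΔ, rfl⟩ := List.mem_map.mp hΓ
      exact (hg Δ hΔ).image _
    · -- ogWeak
      obtain ⟨_, g₁, g₂, Γ', j, _, _, h1, h2⟩ := hstep
      rw [h2] at hΓ
      simp at hΓ
      rcases hΓ with h | h | h
      · exact hg _ (by rw [h1]; simp [h])
      · subst h; exact Finset.insert_nonempty _ _
      · exact hg _ (by rw [h1]; simp [h])
    · -- dupDown
      obtain ⟨_, g₁, g₂, Γ', h1, h2⟩ := hstep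
      rw [h2] at hΓ
      exact hg Γ (by rw [h1]; simp at hΓ ⊢; tauto)
    · -- dupUp
      obtain ⟨_, g₁, g₂, Γ', h1, h2⟩ := hstep
      rw [h2] at hΓ
      exact hg Γ (by rw [h1]; simp at hΓ ⊢; tauto)
    · -- orIntro
      obtain ⟨l₁, l₂, F, G, _, _, hgr⟩ := hstep
      rw [hgr] at hΓ
      obtain ⟨Δ, hΔ, rfl⟩ := List.mem_map.mp hΓ
      exact (hg Δ hΔ).image _
    · -- andIntro
      obtain ⟨l₁, l₂, F, G, merged, _, _, hm, hgr⟩ := hstep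
      rw [hgr] at hΓ
      obtain ⟨Δ, hΔ, rfl⟩ := List.mem_map.mp hΓ
      exact (andMerge_good hm hg Δ hΔ).image _
  | bin C r p q ihp ihq =>
    rintro ⟨hp, hq, _, hpool, hgr⟩
    intro Γ hΓ
    simp only [PTree.concl] at *
    rw [hgr] at hΓ
    rcases List.mem_append.mp hΓ with h | h
    · exact ihp hp Γ h
    · obtain ⟨Δ, hΔ, rfl⟩ := List.mem_map.mp h
      exact (ihq hq Δ hΔ).image _

lemma concl_mem_cirquents (p : PTree) : p.concl ∈ p.cirquents := by
  cases p <;> simp [PTree.concl, PTree.cirquents]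

lemma dup_contra {g₁ g₂ : List (Finset ℕ)} {Γ : Finset ℕ}
    (h : (g₁ ++ Γ :: Γ :: g₂).Pairwise Disjoint) (hne : Γ.Nonempty) : False := by
  have h2 := (List.pairwise_append.mp h).2.1
  have := (List.pairwise_cons.mp h2).1 Γ (List.mem_cons_self)
  exact hne.ne_empty (by simpa using disjoint_self.mp this)

lemma dupfree_of_nosharing : ∀ p : PTree, p.Valid →
    (∀ D ∈ p.cirquents, D.groups.Pairwise Disjoint) → DupFree p := by
  intro p
  induction p with
  | leaf C r =>
    rintro (⟨rfl, _⟩ | ⟨rfl, _⟩) _ <;> exact ⟨rfl, rfl⟩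
  | un C r p ih =>
    rintro ⟨hp, hstep⟩ hshare
    have hsub : ∀ D ∈ p.cirquents, D.groups.Pairwise Disjoint := by
      intro D hD; exact hshare D (by simp [PTree.cirquents, hD])
    obtain ⟨c1, c2⟩ := ih hp hsub
    have hrd : r ≠ .dupDown := by
      rintro rfl
      obtain ⟨_, g₁, g₂, Γ, h1, h2⟩ := hstep
      have hg := valid_good p hp Γ (by rw [h1]; simp)
      have := hshare C (by simp [PTree.cirquents])
      rw [h2] at this
      exact dup_contra this hg
    have hru : r ≠ .dupUp := by
      rintro rfl
      obtain ⟨_, g₁, g₂, Γ, h1, h2⟩ := hstep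
      have hg := valid_good p hp Γ (by rw [h1]; simp)
      have := hshare p.concl (by simp [PTree.cirquents, concl_mem_cirquents])
      rw [h1] at this
      exact dup_contra this hg
    constructor <;> simp [PTree.count, c1, c2, hrd, hru]
  | bin C r p q ihp ihq =>
    rintro ⟨hp, hq, rfl, _⟩ hshare
    have hsubp : ∀ D ∈ p.cirquents, D.groups.Pairwise Disjoint := by
      intro D hD; exact hshare D (by simp [PTree.cirquents, hD])
    have hsubq : ∀ D ∈ q.cirquents, D.groups.Pairwise Disjoint := by
      intro D hD; exact hshare D (by simp [PTree.cirquents, hD])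
    obtain ⟨p1, p2⟩ := ihp hp hsubp
    obtain ⟨q1, q2⟩ := ihq hq hsubq
    constructor <;> simp [PTree.count, p1, p2, q1, q2]

end CirquentCalc

open CirquentCalc

/-- If a cirquent C has a CL5 proof in which no cirquent contains
two distinct ogroups sharing a common oformula, then C is provable in CL5⁻; in
fact, that proof itself contains no application of duplication. -/
theorem cl5_no_sharing_implies_cl5m (C : Cirquent) (p : PTree)
    (hv : p.Valid) (hc : p.concl = C)
    (hshare : ∀ D ∈ p.cirquents, D.groups.Pairwise Disjoint) :
    DupFree p ∧ ∃ q : PTree, q.Valid ∧ DupFree q ∧ q.concl = C := by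
  have hdf := CirquentCalc.dupfree_of_nosharing p hv hshare
  exact ⟨hdf, p, hv, hdf, hc⟩
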